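/- Let n ≥ 1 and let w₀ ∈ S_n be the permutation w₀(i) = n+1−i. Then for every σ ∈ S_n, L(σ ∘ w₀) = L(w₀) − L(σ), where L(w₀) = ⌊n²/4⌋. -/
import Mathlib

namespace OddLength

open Finset

/-- The odd length of a permutation `σ ∈ S_n`: the number of inversions `(i,j)`, `i < j`,
`σ(i) > σ(j)`, whose entries have different parities. -/
def oddLength {n : ℕ} (σ : Equiv.Perm (Fin n)) : ℕ :=
  (Finset.univ.filter fun p : Fin n × Fin n =>
    p.1 < p.2 ∧ σ p.2 < σ p.1 ∧ (p.1 : ℕ) % 2 ≠ (p.2 : ℕ) % 2).card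

private lemma count_lt (n r : ℕ) :
    ((Finset.range n).filter fun i => i % 2 ≠ r % 2).card = (n + r % 2) / 2 := by
  induction n with
  | zero => simp
  | succ n ih =>
    rw [Finset.range_add_one, Finset.filter_insert]
    by_cases h : n % 2 ≠ r % 2
    · rw [if_pos h, Finset.card_insert_of_notMem (by simp), ih]
      omega
    · rw [if_neg h, ih]
      omega

private lemma sq_mod (n : ℕ) : n ^ 2 % 4 = n % 2 := by
  rcases Nat.even_or_odd n with ⟨m, hm⟩ | ⟨m, hm⟩
  · have h2 : n ^ 2 = 4 * m ^ 2 := by rw [hm]; ring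
    rw [h2, hm]
    generalize m ^ 2 = k
    omega
  · have h2 : n ^ 2 = 4 * (m ^ 2 + m) + 1 := by rw [hm]; ring
    rw [h2, hm]
    generalize m ^ 2 = k
    omega

private lemma sum_counts (n : ℕ) :
    (∑ j ∈ Finset.range n, (j + j % 2) / 2) = n ^ 2 / 4 := by
  induction n with
  | zero => simp
  | succ n ih =>
    rw [Finset.sum_range_succ, ih]
    have h1 : (n + 1) ^ 2 = n ^ 2 + 2 * n + 1 := by ring
    have h2 := sq_mod n
    rw [h1]
    generalize n ^ 2 = k at h2 ⊢
    omega

private lemma card_nat (n : ℕ) :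
    ((Finset.range n ×ˢ Finset.range n).filter fun p =>
      p.1 < p.2 ∧ p.1 % 2 ≠ p.2 % 2).card = n ^ 2 / 4 := by
  rw [Finset.card_filter, Finset.sum_product, Finset.sum_comm]
  have h : ∀ j ∈ Finset.range n,
      (∑ i ∈ Finset.range n, if i < j ∧ i % 2 ≠ j % 2 then 1 else 0) = (j + j % 2) / 2 := by
    intro j hj
    rw [← Finset.card_filter, ← count_lt j j]
    congr 1
    ext i
    simp only [Finset.mem_filter, Finset.mem_range] at *
    omega
  rw [Finset.sum_congr rfl h, sum_counts]

private lemma card_T (n : ℕ) :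
    (Finset.univ.filter fun p : Fin n × Fin n =>
      p.1 < p.2 ∧ (p.1 : ℕ) % 2 ≠ (p.2 : ℕ) % 2).card = n ^ 2 / 4 := by
  rw [← card_nat n]
  apply Finset.card_bij (fun p _ => ((p.1 : ℕ), (p.2 : ℕ)))
  · intro p hp
    simp only [Finset.mem_filter, Finset.mem_univ, true_and, Finset.mem_product,
      Finset.mem_range, Fin.lt_def] at *
    exact ⟨⟨p.1.isLt, p.2.isLt⟩, hp⟩
  · intro p _ q _ h
    simp only [Prod.mk.injEq] at h
    exact Prod.ext (Fin.val_injective h.1) (Fin.val_injective h.2)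
  · intro q hq
    simp only [Finset.mem_filter, Finset.mem_product, Finset.mem_range] at hq
    refine ⟨(⟨q.1, hq.1.1⟩, ⟨q.2, hq.1.2⟩), ?_, rfl⟩
    simp only [Finset.mem_filter, Finset.mem_univ, true_and, Fin.lt_def]
    exact hq.2

private lemma oddLength_rev (n : ℕ) :
    oddLength (Fin.revPerm : Equiv.Perm (Fin n)) =
      (Finset.univ.filter fun p : Fin n × Fin n =>
        p.1 < p.2 ∧ (p.1 : ℕ) % 2 ≠ (p.2 : ℕ) % 2).card := by
  unfold oddLength
  congr 1
  ext p
  simp only [Finset.mem_filter, Finset.mem_univ, true_and, Fin.revPerm_apply]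
  rw [Fin.rev_lt_rev]
  tauto

private lemma oddLength_mul_rev {n : ℕ} (σ : Equiv.Perm (Fin n)) :
    oddLength (σ * Fin.revPerm) =
      (Finset.univ.filter fun p : Fin n × Fin n =>
        p.1 < p.2 ∧ σ p.1 < σ p.2 ∧ (p.1 : ℕ) % 2 ≠ (p.2 : ℕ) % 2).card := by
  unfold oddLength
  refine Finset.card_bij' (fun p _ => (p.2.rev, p.1.rev)) (fun p _ => (p.2.rev, p.1.rev))
    ?_ ?_ ?_ ?_
  · intro p hp
    rw [Finset.mem_filter] at hp
    obtain ⟨-, h1, h2, h3⟩ := hp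
    simp only [Equiv.Perm.mul_apply, Fin.revPerm_apply] at h2
    rw [Finset.mem_filter]
    refine ⟨Finset.mem_univ _, Fin.rev_lt_rev.mpr h1, h2, ?_⟩
    have e1 := p.1.isLt
    have e2 := p.2.isLt
    simp only [Fin.val_rev]
    omega
  · intro p hp
    rw [Finset.mem_filter] at hp
    obtain ⟨-, h1, h2, h3⟩ := hp
    rw [Finset.mem_filter]
    refine ⟨Finset.mem_univ _, Fin.rev_lt_rev.mpr h1, ?_, ?_⟩
    · simp only [Equiv.Perm.mul_apply, Fin.revPerm_apply, Fin.rev_rev]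
      exact h2
    · have e1 := p.1.isLt
      have e2 := p.2.isLt
      simp only [Fin.val_rev]
      omega
  · intro p _
    simp [Fin.rev_rev]
  · intro p _
    simp [Fin.rev_rev]

private lemma add_eq {n : ℕ} (σ : Equiv.Perm (Fin n)) :
    oddLength σ +
      (Finset.univ.filter fun p : Fin n × Fin n =>
        p.1 < p.2 ∧ σ p.1 < σ p.2 ∧ (p.1 : ℕ) % 2 ≠ (p.2 : ℕ) % 2).card =
    (Finset.univ.filter fun p : Fin n × Fin n =>
      p.1 < p.2 ∧ (p.1 : ℕ) % 2 ≠ (p.2 : ℕ) % 2).card := by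
  unfold oddLength
  rw [Finset.card_filter, Finset.card_filter, Finset.card_filter, ← Finset.sum_add_distrib]
  apply Finset.sum_congr rfl
  intro p _
  rcases lt_trichotomy (σ p.1) (σ p.2) with h | h | h
  · simp [h, h.asymm]
  · have hp : p.1 = p.2 := σ.injective h
    simp [hp]
  · simp [h, h.asymm]

/-- For the longest element `w₀ : i ↦ n+1-i` of `S_n` (here `Fin.revPerm`)
one has `L(σ ∘ w₀) = L(w₀) - L(σ)` for every `σ`, and `L(w₀) = ⌊n²/4⌋`. -/
theorem statement9 (n : ℕ) (hn : 1 ≤ n) :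
    (∀ σ : Equiv.Perm (Fin n),
      (oddLength (σ * Fin.revPerm) : ℤ) =
        (oddLength (Fin.revPerm : Equiv.Perm (Fin n)) : ℤ) - (oddLength σ : ℤ)) ∧
    oddLength (Fin.revPerm : Equiv.Perm (Fin n)) = n ^ 2 / 4 := by
  constructor
  · intro σ
    have h1 := oddLength_mul_rev σ
    have h2 := add_eq σ
    have h3 := oddLength_rev n
    omega
  · rw [oddLength_rev n, card_T n]

end OddLength
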